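/- arXiv:nlin/0608065 — 5 statements merged into one kernel-verified Lean document; each statement's English description precedes it below -/
import Mathlib

section
/- (Proposition 3.1: co-solutions of relative equilibria) Suppose u₀ is a relative equilibrium: Φ_t(u₀) = e^{ξt}u₀ for all t ≥ 0, with drift ξ ∈ LΓ. Suppose there are γ_n ∈ Γ, η ∈ LΓ and v₀ ∈ B such that ‖γ_n u₀ − v₀‖_w → 0 and, for each t > 0, ‖(e^{ξ_n t} − e^{ηt})γ_n u₀‖_w → 0 as n → ∞, where ξ_n is the drift of γ_n u₀ (i.e. e^{ξ_n t} = γ_n e^{ξt} γ_n^{-1}). If the flow Φ_t and the maps e^{ηt} are continuous in ‖·‖_w, then v₀ is a relative equilibrium with drift η: Φ_t(v₀) = e^{ηt}v₀ for all t ≥ 0. -/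
open Filter Topology

/-- Proposition 3.1: co-solutions of relative equilibria.  Suppose `Φ_t(u₀) = e^{ξt}u₀`,
`‖γ_n u₀ - v₀‖_w → 0` and `‖(e^{ξ_n t} - e^{ηt})γ_n u₀‖_w → 0` for each `t > 0`, where
`e^{ξ_n t} = γ_n e^{ξt} γ_n⁻¹` is the drift of `γ_n u₀`.  Then `v₀` is a relative
equilibrium with drift `η`: `Φ_t(v₀) = e^{ηt}v₀`. -/
theorem cosolution_relative_equilibrium
    {B : Type*} [AddCommGroup B] [Module ℝ B]
    {Γ : Type*} [Group Γ] [DistribMulAction Γ B]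
    (nw : Seminorm ℝ B)
    (hsep : ∀ u : B, nw u = 0 → u = 0)
    (hbdd : ∀ γ : Γ, ∃ K : ℝ, ∀ u : B, nw (γ • u) ≤ K * nw u)
    (Φ : ℝ → B → B)
    (hΦ0 : Φ 0 = id)
    (hΦadd : ∀ s t : ℝ, 0 ≤ s → 0 ≤ t → ∀ u : B, Φ t (Φ s u) = Φ (s + t) u)
    (hequiv : ∀ t : ℝ, 0 ≤ t → ∀ (γ : Γ) (u : B), Φ t (γ • u) = γ • Φ t u)
    (hwcont : ∀ t : ℝ, 0 ≤ t → ∀ u : B, ∀ ε > (0 : ℝ), ∃ δ > (0 : ℝ),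
      ∀ v : B, nw (v - u) < δ → nw (Φ t v - Φ t u) < ε)
    -- the one-parameter subgroups `t ↦ e^{ξt}` and `t ↦ e^{ηt}` of `Γ`
    (eξ eη : ℝ → Γ)
    (hξ0 : eξ 0 = 1) (hξadd : ∀ s t : ℝ, eξ (s + t) = eξ s * eξ t)
    (hη0 : eη 0 = 1) (hηadd : ∀ s t : ℝ, eη (s + t) = eη s * eη t)
    -- weak continuity of the maps `u ↦ e^{ηt}u`
    (hηcont : ∀ t : ℝ, 0 ≤ t → ∀ ε > (0 : ℝ), ∃ δ > (0 : ℝ),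
      ∀ u v : B, nw (u - v) < δ → nw (eη t • u - eη t • v) < ε)
    (u₀ v₀ : B)
    -- `u₀` is a relative equilibrium with drift `ξ`
    (hrel : ∀ t : ℝ, 0 ≤ t → Φ t u₀ = eξ t • u₀)
    (γseq : ℕ → Γ)
    (hclos : Tendsto (fun k => nw (γseq k • u₀ - v₀)) atTop (𝓝 0))
    -- `‖(e^{ξ_n t} - e^{ηt}) γ_n u₀‖_w → 0` where `e^{ξ_n t} = γ_n e^{ξt} γ_n⁻¹`
    (hdrift : ∀ t : ℝ, 0 < t →
      Tendsto (fun k =>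
        nw ((γseq k * eξ t * (γseq k)⁻¹) • (γseq k • u₀) - eη t • (γseq k • u₀)))
        atTop (𝓝 0)) :
    ∀ t : ℝ, 0 ≤ t → Φ t v₀ = eη t • v₀ := by
  intro t ht
  rcases ht.eq_or_lt with h0 | ht'
  · subst h0; simp [hΦ0, hη0]
  · -- t > 0
    have key : nw (Φ t v₀ - eη t • v₀) = 0 := by
      by_contra hne
      have hpos : 0 < nw (Φ t v₀ - eη t • v₀) :=
        lt_of_le_of_ne (apply_nonneg nw _) (Ne.symm hne)
      set ε := nw (Φ t v₀ - eη t • v₀) with hε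
      obtain ⟨δ₁, hδ₁, h1⟩ := hwcont t ht v₀ (ε/3) (by linarith)
      obtain ⟨δ₂, hδ₂, h2⟩ := hηcont t ht (ε/3) (by linarith)
      have hclos' : ∀ᶠ k in atTop, nw (γseq k • u₀ - v₀) < min δ₁ δ₂ := by
        have := hclos.eventually (gt_mem_nhds (lt_min hδ₁ hδ₂))
        exact this
      have hdrift' : ∀ᶠ k in atTop,
          nw ((γseq k * eξ t * (γseq k)⁻¹) • (γseq k • u₀) - eη t • (γseq k • u₀)) < ε/3 :=
        (hdrift t ht').eventually (gt_mem_nhds (by linarith))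
      obtain ⟨k, hk1, hk2⟩ := (hclos'.and hdrift').exists
      have hΦeq : Φ t (γseq k • u₀) = (γseq k * eξ t * (γseq k)⁻¹) • (γseq k • u₀) := by
        rw [hequiv t ht, hrel t ht, smul_smul, smul_smul]
        congr 1
        group
      have e1 : nw (Φ t v₀ - Φ t (γseq k • u₀)) < ε/3 := by
        have := h1 (γseq k • u₀) (lt_of_lt_of_le hk1 (min_le_left _ _))
        rwa [← map_neg_eq_map nw, neg_sub] at this
      have e3 : nw (eη t • (γseq k • u₀) - eη t • v₀) < ε/3 :=
        h2 _ _ (lt_of_lt_of_le hk1 (min_le_right _ _))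
      have tri : nw (Φ t v₀ - eη t • v₀) ≤
          nw (Φ t v₀ - Φ t (γseq k • u₀)) +
          nw (Φ t (γseq k • u₀) - eη t • (γseq k • u₀)) +
          nw (eη t • (γseq k • u₀) - eη t • v₀) := by
        have h := map_add_le_add nw (Φ t v₀ - Φ t (γseq k • u₀))
          (Φ t (γseq k • u₀) - eη t • (γseq k • u₀) + (eη t • (γseq k • u₀) - eη t • v₀))
        have h' := map_add_le_add nw (Φ t (γseq k • u₀) - eη t • (γseq k • u₀))
          (eη t • (γseq k • u₀) - eη t • v₀)
        calc nw (Φ t v₀ - eη t • v₀) = nw (Φ t v₀ - Φ t (γseq k • u₀) +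
              (Φ t (γseq k • u₀) - eη t • (γseq k • u₀) +
               (eη t • (γseq k • u₀) - eη t • v₀))) := by congr 1; abel
          _ ≤ _ := h
          _ ≤ _ := by linarith
      rw [hΦeq] at e1 tri
      have : ε < ε := by
        calc ε ≤ _ := tri
          _ < ε/3 + ε/3 + ε/3 := by linarith
          _ = ε := by ring
      exact absurd this (lt_irrefl _)
    exact sub_eq_zero.mp (hsep _ key)
end

section
/- If v₀ ∈ clos_w(Γu₀) and the drift ξ of the relative equilibrium u₀ lies in the centre of Γ (so that e^{ξt} commutes with all γ ∈ Γ), and each e^{ξt} is weakly continuous, then v₀ is a relative equilibrium with the same drift ξ. -/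
open Filter Topology

/-- If `v₀ ∈ clos_w(Γu₀)` and the drift `ξ` of the relative equilibrium `u₀` lies in the
centre of `Γ`, with each `e^{ξt}` weakly continuous, then `v₀` is a relative
equilibrium with the same drift `ξ`. -/
theorem cosolution_central_drift
    {B : Type*} [AddCommGroup B] [Module ℝ B]
    {Γ : Type*} [Group Γ] [DistribMulAction Γ B]
    (nw : Seminorm ℝ B)
    (hsep : ∀ u : B, nw u = 0 → u = 0)
    (hbdd : ∀ γ : Γ, ∃ K : ℝ, ∀ u : B, nw (γ • u) ≤ K * nw u)
    (Φ : ℝ → B → B)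
    (hΦ0 : Φ 0 = id)
    (hΦadd : ∀ s t : ℝ, 0 ≤ s → 0 ≤ t → ∀ u : B, Φ t (Φ s u) = Φ (s + t) u)
    (hequiv : ∀ t : ℝ, 0 ≤ t → ∀ (γ : Γ) (u : B), Φ t (γ • u) = γ • Φ t u)
    (hwcont : ∀ t : ℝ, 0 ≤ t → ∀ u : B, ∀ ε > (0 : ℝ), ∃ δ > (0 : ℝ),
      ∀ v : B, nw (v - u) < δ → nw (Φ t v - Φ t u) < ε)
    (eξ : ℝ → Γ)
    (hξ0 : eξ 0 = 1) (hξadd : ∀ s t : ℝ, eξ (s + t) = eξ s * eξ t)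
    -- `ξ` lies in the centre of `Γ`
    (hcent : ∀ (γ : Γ) (t : ℝ), γ * eξ t = eξ t * γ)
    -- weak continuity of the maps `u ↦ e^{ξt}u`
    (hξcont : ∀ t : ℝ, 0 ≤ t → ∀ ε > (0 : ℝ), ∃ δ > (0 : ℝ),
      ∀ u v : B, nw (u - v) < δ → nw (eξ t • u - eξ t • v) < ε)
    (u₀ v₀ : B)
    (hrel : ∀ t : ℝ, 0 ≤ t → Φ t u₀ = eξ t • u₀)
    (γseq : ℕ → Γ)
    (hclos : Tendsto (fun k => nw (γseq k • u₀ - v₀)) atTop (𝓝 0)) :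
    ∀ t : ℝ, 0 ≤ t → Φ t v₀ = eξ t • v₀ := by
  intro t ht
  have key : ∀ γ : Γ, Φ t (γ • u₀) = eξ t • (γ • u₀) := by
    intro γ
    rw [hequiv t ht γ u₀, hrel t ht, ← mul_smul, hcent γ t, mul_smul]
  rw [← sub_eq_zero]
  refine hsep _ ?_
  by_contra hne
  have hpos : (0 : ℝ) < nw (Φ t v₀ - eξ t • v₀) :=
    lt_of_le_of_ne (apply_nonneg nw _) (Ne.symm hne)
  set ε := nw (Φ t v₀ - eξ t • v₀)
  obtain ⟨δ₁, hδ₁, h₁⟩ := hwcont t ht v₀ (ε / 2) (by linarith)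
  obtain ⟨δ₂, hδ₂, h₂⟩ := hξcont t ht (ε / 2) (by linarith)
  have hmin : (0 : ℝ) < min δ₁ δ₂ := lt_min hδ₁ hδ₂
  obtain ⟨k, hk⟩ := (hclos.eventually (gt_mem_nhds hmin)).exists
  have hA : nw (Φ t (γseq k • u₀) - Φ t v₀) < ε / 2 :=
    h₁ _ (lt_of_lt_of_le hk (min_le_left _ _))
  have hB : nw (eξ t • (γseq k • u₀) - eξ t • v₀) < ε / 2 :=
    h₂ _ _ (lt_of_lt_of_le hk (min_le_right _ _))
  have htri : ε ≤ nw (Φ t v₀ - Φ t (γseq k • u₀)) + nw (Φ t (γseq k • u₀) - eξ t • v₀) := by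
    have h := map_add_le_add nw (Φ t v₀ - Φ t (γseq k • u₀)) (Φ t (γseq k • u₀) - eξ t • v₀)
    simpa using h
  rw [key (γseq k)] at htri
  have hA' : nw (Φ t v₀ - Φ t (γseq k • u₀)) < ε / 2 := by
    rw [map_sub_rev]; exact hA
  rw [key (γseq k)] at hA'
  linarith
end

section
/- (Theorem 4.2: inheritance of stability) Assume hypotheses (H1)–(H3). Suppose u₀, v₀ ∈ B with v₀ ∈ clos_w(Γu₀), Φ_t is a Γ-equivariant semiflow continuous in both the strong and weak norms, and u₀ is ss-stable. Then v₀ is sw-stable. -/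
open Filter Topology

/-- `u₀` is sw-stable. -/
def SwStable {B : Type*} [AddCommGroup B] [Module ℝ B]
    (ns nw : Seminorm ℝ B) (Φ : ℝ → B → B) (u₀ : B) : Prop :=
  ∀ ε > (0 : ℝ), ∃ δ > (0 : ℝ), ∀ u : B, ns (u - u₀) < δ →
    ∀ t > (0 : ℝ), nw (Φ t u - Φ t u₀) < ε

/-- `u₀` is ss-stable. -/
def SsStable {B : Type*} [AddCommGroup B] [Module ℝ B]
    (ns : Seminorm ℝ B) (Φ : ℝ → B → B) (u₀ : B) : Prop :=
  ∀ ε > (0 : ℝ), ∃ δ > (0 : ℝ), ∀ u : B, ns (u - u₀) < δ →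
    ∀ t > (0 : ℝ), ns (Φ t u - Φ t u₀) < ε

/-- `v` lies in the weak closure of the orbit `Γu`. -/
def InWeakOrbitClosure {B : Type*} [AddCommGroup B] [Module ℝ B]
    {Γ : Type*} [Group Γ] [DistribMulAction Γ B]
    (nw : Seminorm ℝ B) (u v : B) : Prop :=
  ∃ γseq : ℕ → Γ, Tendsto (fun k => nw (γseq k • u - v)) atTop (𝓝 0)

/-- Theorem 4.2 (inheritance of stability): under (H1)–(H3), if `v₀ ∈ clos_w(Γu₀)` and
`u₀` is ss-stable, then `v₀` is sw-stable. -/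
theorem inheritance_of_stability
    {B : Type*} [AddCommGroup B] [Module ℝ B]
    {Γ : Type*} [Group Γ] [DistribMulAction Γ B]
    (ns nw : Seminorm ℝ B)
    -- (H1)(a): the strong norm is Γ-invariant
    (h1a : ∀ (γ : Γ) (u : B), ns (γ • u) = ns u)
    -- (H1)(b): each γ is weakly bounded
    (h1b : ∀ γ : Γ, ∃ K > (0 : ℝ), ∀ u : B, nw (γ • u) ≤ K * nw u)
    -- the family Λ of multiplication operators
    (Λ : Set (B →ₗ[ℝ] B))
    -- (H2)(a): ‖u‖_w ≤ ‖λu‖_s ≤ ‖u‖_s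
    (h2a : ∀ L ∈ Λ, ∀ u : B, nw u ≤ ns (L u) ∧ ns (L u) ≤ ns u)
    -- (H2)(b): ‖u‖_s ≤ M implies ‖(1-λ)u‖_w < ε for a suitable λ ∈ Λ
    (h2b : ∀ M > (0 : ℝ), ∀ ε > (0 : ℝ), ∃ L ∈ Λ, ∀ u : B, ns u ≤ M → nw (u - L u) < ε)
    -- (H3): approximation of weak-closure points in λ-weighted strong norm
    (h3 : ∀ u v : B, InWeakOrbitClosure (Γ := Γ) nw u v →
      ∀ L ∈ Λ, ∀ ε > (0 : ℝ), ∃ γ : Γ, ns (L (γ • u - v)) < ε)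
    (Φ : ℝ → B → B)
    (hequiv : ∀ (t : ℝ) (γ : Γ) (u : B), Φ t (γ • u) = γ • Φ t u)
    -- strong continuity of the semiflow
    (hscont : ∀ t : ℝ, 0 ≤ t → ∀ u : B, ∀ ε > (0 : ℝ), ∃ δ > (0 : ℝ),
      ∀ v : B, ns (v - u) < δ → ns (Φ t v - Φ t u) < ε)
    -- weak continuity of the semiflow
    (hwcont : ∀ t : ℝ, 0 ≤ t → ∀ u : B, ∀ ε > (0 : ℝ), ∃ δ > (0 : ℝ),
      ∀ v : B, nw (v - u) < δ → nw (Φ t v - Φ t u) < ε)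
    (u₀ v₀ : B)
    (hclos : InWeakOrbitClosure (Γ := Γ) nw u₀ v₀)
    (hss : SsStable ns Φ u₀) :
    SwStable ns nw Φ v₀ := by
  -- Some L ∈ Λ gives nw ≤ ns
  obtain ⟨L, hL, -⟩ := h2b 1 one_pos 1 one_pos
  have nwle : ∀ x : B, nw x ≤ ns x := fun x => (h2a L hL x).1.trans (h2a L hL x).2
  intro ε hε
  obtain ⟨δ₁, hδ₁pos, hδ₁⟩ := hss (ε / 3) (by linarith)
  refine ⟨δ₁, hδ₁pos, fun u hu t ht => ?_⟩
  obtain ⟨δ₂, hδ₂pos, hδ₂⟩ := hwcont t ht.le v₀ (ε / 3) (by linarith)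
  obtain ⟨δ₃, hδ₃pos, hδ₃⟩ := hwcont t ht.le u (ε / 3) (by linarith)
  obtain ⟨γseq, hγ⟩ := hclos
  have hmin : (0 : ℝ) < min δ₂ δ₃ := lt_min hδ₂pos hδ₃pos
  obtain ⟨k, hk⟩ := (hγ.eventually (gt_mem_nhds hmin)).exists
  set γ : Γ := γseq k with hγdef
  set w : B := u₀ + γ⁻¹ • (u - v₀) with hw
  have hwu : ns (w - u₀) < δ₁ := by
    have : w - u₀ = γ⁻¹ • (u - v₀) := by rw [hw]; abel
    rw [this, h1a]; exact hu
  have hmid : ns (Φ t w - Φ t u₀) < ε / 3 := hδ₁ w hwu t ht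
  have hγw : γ • w = γ • u₀ + (u - v₀) := by
    rw [hw, smul_add, smul_inv_smul]
  have hmid' : nw (Φ t (γ • w) - Φ t (γ • u₀)) < ε / 3 := by
    rw [hequiv, hequiv, ← smul_sub]
    calc nw (γ • (Φ t w - Φ t u₀)) ≤ ns (γ • (Φ t w - Φ t u₀)) := nwle _
      _ = ns (Φ t w - Φ t u₀) := h1a _ _
      _ < ε / 3 := hmid
  have hfirst : nw (Φ t u - Φ t (γ • w)) < ε / 3 := by
    have h1 : nw (γ • w - u) < δ₃ := by
      have : γ • w - u = γ • u₀ - v₀ := by rw [hγw]; abel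
      rw [this]; exact hk.trans_le (min_le_right _ _)
    have := hδ₃ (γ • w) h1
    rwa [← map_sub_rev] at this
  have hthird : nw (Φ t (γ • u₀) - Φ t v₀) < ε / 3 :=
    hδ₂ (γ • u₀) (hk.trans_le (min_le_left _ _))
  have hdecomp : Φ t u - Φ t v₀ =
      (Φ t u - Φ t (γ • w)) + (Φ t (γ • w) - Φ t (γ • u₀)) + (Φ t (γ • u₀) - Φ t v₀) := by
    abel
  calc nw (Φ t u - Φ t v₀)
      ≤ nw ((Φ t u - Φ t (γ • w)) + (Φ t (γ • w) - Φ t (γ • u₀)))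
          + nw (Φ t (γ • u₀) - Φ t v₀) := by rw [hdecomp]; exact map_add_le_add nw _ _
    _ ≤ nw (Φ t u - Φ t (γ • w)) + nw (Φ t (γ • w) - Φ t (γ • u₀))
          + nw (Φ t (γ • u₀) - Φ t v₀) := by gcongr; exact map_add_le_add nw _ _
    _ < ε / 3 + ε / 3 + ε / 3 := by gcongr <;> assumption
    _ = ε := by ring
end

section
/- (Lemma 4.3) Assume (H1)–(H4) and that u₀ ∈ B has cocompact isotropy subgroup Σ (i.e. Γ/Σ is compact). Then u₀ is ss-stable if and only if u₀ is sw-stable. -/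
open Filter Topology

/-- Lemma 4.3: under (H1)–(H4), if `u₀` has cocompact isotropy subgroup `Σ`
(`Γ/Σ` compact), then `u₀` is ss-stable if and only if it is sw-stable. -/
theorem ssStable_iff_swStable_of_cocompact_isotropy
    {B : Type*} [AddCommGroup B] [Module ℝ B]
    {Γ : Type*} [Group Γ] [TopologicalSpace Γ] [IsTopologicalGroup Γ]
    [DistribMulAction Γ B]
    (ns nw : Seminorm ℝ B)
    -- (H1)(a): the strong norm is Γ-invariant
    (h1a : ∀ (γ : Γ) (u : B), ns (γ • u) = ns u)
    -- (H1)(b),(c): the weak operator norm `γ ↦ ‖γ‖_w` is finite, positive and continuous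
    (wop : Γ → ℝ)
    (h1b : ∀ γ : Γ, 0 < wop γ ∧ ∀ u : B, nw (γ • u) ≤ wop γ * nw u)
    (h1c : Continuous wop)
    -- the family Λ of multiplication operators, (H2)(a),(b)
    (Λ : Set (B →ₗ[ℝ] B))
    (h2a : ∀ L ∈ Λ, ∀ u : B, nw u ≤ ns (L u) ∧ ns (L u) ≤ ns u)
    (h2b : ∀ M > (0 : ℝ), ∀ ε > (0 : ℝ), ∃ L ∈ Λ, ∀ u : B, ns u ≤ M → nw (u - L u) < ε)
    -- (H3)
    (h3 : ∀ u v : B,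
      (∃ γseq : ℕ → Γ, Tendsto (fun k => nw (γseq k • u - v)) atTop (𝓝 0)) →
      ∀ L ∈ Λ, ∀ ε > (0 : ℝ), ∃ γ : Γ, ns (L (γ • u - v)) < ε)
    -- (H4): sup_γ ‖γu‖_w small implies ‖u‖_s small
    (h4 : ∀ ε > (0 : ℝ), ∃ δ > (0 : ℝ), ∀ u : B, (∀ γ : Γ, nw (γ • u) < δ) → ns u < ε)
    (Φ : ℝ → B → B)
    (hequiv : ∀ (t : ℝ) (γ : Γ) (u : B), Φ t (γ • u) = γ • Φ t u)
    (u₀ : B)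
    -- `u₀` has cocompact isotropy
    (hcocompact : CompactSpace (Γ ⧸ MulAction.stabilizer Γ u₀)) :
    SsStable ns Φ u₀ ↔ SwStable ns nw Φ u₀ := by

  obtain ⟨L, hLΛ, -⟩ := h2b 1 one_pos 1 one_pos
  have hws : ∀ w : B, nw w ≤ ns w := fun w =>
    le_trans (h2a L hLΛ w).1 (h2a L hLΛ w).2
  constructor
  · intro hss ε hε
    obtain ⟨δ, hδ, hδ'⟩ := hss ε hε
    exact ⟨δ, hδ, fun u hu t ht => lt_of_le_of_lt (hws _) (hδ' u hu t ht)⟩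
  · intro hsw ε hε
    obtain ⟨δ, hδpos, hδ⟩ := h4 ε hε
    -- find a bound `C` such that every coset of the stabilizer contains a
    -- representative `γ'` with `wop γ' ≤ C`
    have hcover : ∃ C > (0 : ℝ), ∀ γ : Γ, ∃ γ' : Γ,
        (γ'⁻¹ * γ) ∈ MulAction.stabilizer Γ u₀ ∧ wop γ' ≤ C := by
      have hq : IsOpenMap (QuotientGroup.mk : Γ → Γ ⧸ MulAction.stabilizer Γ u₀) :=
        QuotientGroup.isOpenMap_coe
      obtain ⟨s, hs⟩ := isCompact_univ.elim_finite_subcover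
        (fun γ₀ : Γ => QuotientGroup.mk '' (wop ⁻¹' Set.Iio (wop γ₀ + 1)))
        (fun γ₀ => hq _ (isOpen_Iio.preimage h1c))
        (fun x _ => by
          obtain ⟨γ, rfl⟩ := QuotientGroup.mk_surjective x
          exact Set.mem_iUnion.2 ⟨γ, ⟨γ, by simp, rfl⟩⟩)
      have hsne : s.Nonempty := by
        rcases Set.mem_iUnion.1 (hs (Set.mem_univ (QuotientGroup.mk (1 : Γ)))) with ⟨γ₀, hγ₀⟩
        rcases Set.mem_iUnion.1 hγ₀ with ⟨hmem, -⟩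
        exact ⟨γ₀, hmem⟩
      refine ⟨s.sup' hsne (fun γ₀ => wop γ₀ + 1), ?_, ?_⟩
      · obtain ⟨γ₀, hγ₀⟩ := hsne
        exact lt_of_lt_of_le (by linarith [(h1b γ₀).1])
          (Finset.le_sup' (fun γ₀ => wop γ₀ + 1) hγ₀)
      · intro γ
        rcases Set.mem_iUnion.1 (hs (Set.mem_univ (QuotientGroup.mk γ))) with ⟨γ₀, hγ₀⟩
        rcases Set.mem_iUnion.1 hγ₀ with ⟨hmem, ⟨γ', hγ'lt, hγ'eq⟩⟩
        refine ⟨γ', (QuotientGroup.eq).1 hγ'eq, ?_⟩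
        exact le_trans (le_of_lt hγ'lt) (Finset.le_sup' (fun γ₀ => wop γ₀ + 1) hmem)
    obtain ⟨C, hCpos, hC⟩ := hcover
    obtain ⟨δ', hδ'pos, hδ'⟩ := hsw (δ / C) (div_pos hδpos hCpos)
    refine ⟨δ', hδ'pos, fun u hu t ht => ?_⟩
    apply hδ
    intro γ
    obtain ⟨γ', hσmem, hγ'C⟩ := hC γ
    set σ : Γ := γ'⁻¹ * γ with hσdef
    have hγ : γ = γ' * σ := by rw [hσdef]; group
    have hσu₀ : σ • u₀ = u₀ := hσmem
    have k1 : γ • Φ t u = γ' • Φ t (σ • u) := by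
      rw [hequiv, ← mul_smul, ← hγ]
    have k2 : γ • Φ t u₀ = γ' • Φ t u₀ := by
      rw [hγ, mul_smul, ← hequiv, hσu₀]
    have key : γ • (Φ t u - Φ t u₀) = γ' • (Φ t (σ • u) - Φ t u₀) := by
      rw [smul_sub, smul_sub, k1, k2]
    have hns : ns (σ • u - u₀) < δ' := by
      have : σ • u - u₀ = σ • (u - u₀) := by rw [smul_sub, hσu₀]
      rw [this, h1a]
      exact hu
    have hnw : nw (Φ t (σ • u) - Φ t u₀) < δ / C := hδ' (σ • u) hns t ht
    calc nw (γ • (Φ t u - Φ t u₀)) = nw (γ' • (Φ t (σ • u) - Φ t u₀)) := by rw [key]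
      _ ≤ wop γ' * nw (Φ t (σ • u) - Φ t u₀) := (h1b γ').2 _
      _ ≤ C * nw (Φ t (σ • u) - Φ t u₀) :=
          mul_le_mul_of_nonneg_right hγ'C (apply_nonneg nw _)
      _ < C * (δ / C) := by
          exact mul_lt_mul_of_pos_left hnw hCpos
      _ = δ := by field_simp
end

section
/- (Theorem 4.4) Assume (H1)–(H4). Suppose u₀, v₀ ∈ B with v₀ ∈ clos_w(Γu₀), v₀ has cocompact isotropy subgroup, Φ_t is Γ-equivariant and continuous in both norms, and u₀ is ss-stable. Then v₀ is ss-stable. -/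
open Filter Topology

/-- Triangle inequality with two intermediate points, for a seminorm. -/
private lemma seminorm_tri3 {B : Type*} [AddCommGroup B] [Module ℝ B]
    (p : Seminorm ℝ B) (a b c d : B) :
    p (a - d) ≤ p (a - b) + p (b - c) + p (c - d) := by
  have h : a - d = (a - b) + (b - c) + (c - d) := by abel
  rw [h]
  exact le_trans (map_add_le_add p _ _) (add_le_add (map_add_le_add p _ _) le_rfl)

/-- From cocompactness of `Γ ⧸ H` and continuity of the weight `wop`, every `σ ∈ Γ`
factors as `σ = τ * s` with `s ∈ H` and `wop τ` bounded by a uniform constant. -/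
private lemma exists_cocompact_weight_bound {Γ : Type*} [Group Γ] [TopologicalSpace Γ]
    [IsTopologicalGroup Γ] (H : Subgroup Γ) (hcomp : CompactSpace (Γ ⧸ H))
    (wop : Γ → ℝ) (h1c : Continuous wop) :
    ∃ C : ℝ, 1 ≤ C ∧ ∀ σ : Γ, ∃ τ : Γ, ∃ s ∈ H, σ = τ * s ∧ wop τ ≤ C := by
  haveI := hcomp
  have hcov : (Set.univ : Set (Γ ⧸ H)) ⊆
      ⋃ x : Γ ⧸ H, (QuotientGroup.mk : Γ → Γ ⧸ H) ''
        (wop ⁻¹' Set.Iio (wop (Quotient.out x) + 1)) := by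
    intro y _
    refine Set.mem_iUnion.mpr ⟨y, ⟨Quotient.out y, ?_, QuotientGroup.out_eq' y⟩⟩
    show wop (Quotient.out y) < wop (Quotient.out y) + 1
    exact lt_add_one _
  obtain ⟨T, hT⟩ := isCompact_univ.elim_finite_subcover _
    (fun x => QuotientGroup.isOpenMap_coe _ (IsOpen.preimage h1c isOpen_Iio)) hcov
  refine ⟨1 + ∑ x ∈ T, |wop (Quotient.out x) + 1|, le_add_of_nonneg_right
    (Finset.sum_nonneg fun _ _ => abs_nonneg _), fun σ => ?_⟩
  have hσ := hT (Set.mem_univ ((σ : Γ ⧸ H)))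
  obtain ⟨x, hxT, τ, hτ, hqτ⟩ := Set.mem_iUnion₂.mp hσ
  have hmem : τ⁻¹ * σ ∈ H := QuotientGroup.eq.mp hqτ
  refine ⟨τ, τ⁻¹ * σ, hmem, (mul_inv_cancel_left τ σ).symm, ?_⟩
  have h1 : wop τ < wop (Quotient.out x) + 1 := hτ
  have h2 : wop (Quotient.out x) + 1 ≤ |wop (Quotient.out x) + 1| := le_abs_self _
  have h3 : |wop (Quotient.out x) + 1| ≤ ∑ y ∈ T, |wop (Quotient.out y) + 1| :=
    Finset.single_le_sum (f := fun y => |wop (Quotient.out y) + 1|) (fun i _ => abs_nonneg _) hxT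
  linarith

/-- Theorem 4.4: under (H1)–(H4), if `v₀ ∈ clos_w(Γu₀)` has cocompact isotropy and `u₀`
is ss-stable, then `v₀` is ss-stable. -/
theorem inheritance_of_ss_stability
    {B : Type*} [AddCommGroup B] [Module ℝ B]
    {Γ : Type*} [Group Γ] [TopologicalSpace Γ] [IsTopologicalGroup Γ]
    [DistribMulAction Γ B]
    (ns nw : Seminorm ℝ B)
    -- (H1)(a)
    (h1a : ∀ (γ : Γ) (u : B), ns (γ • u) = ns u)
    -- (H1)(b),(c)
    (wop : Γ → ℝ)
    (h1b : ∀ γ : Γ, 0 < wop γ ∧ ∀ u : B, nw (γ • u) ≤ wop γ * nw u)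
    (h1c : Continuous wop)
    -- (H2)
    (Λ : Set (B →ₗ[ℝ] B))
    (h2a : ∀ L ∈ Λ, ∀ u : B, nw u ≤ ns (L u) ∧ ns (L u) ≤ ns u)
    (h2b : ∀ M > (0 : ℝ), ∀ ε > (0 : ℝ), ∃ L ∈ Λ, ∀ u : B, ns u ≤ M → nw (u - L u) < ε)
    -- (H3)
    (h3 : ∀ u v : B, InWeakOrbitClosure (Γ := Γ) nw u v →
      ∀ L ∈ Λ, ∀ ε > (0 : ℝ), ∃ γ : Γ, ns (L (γ • u - v)) < ε)
    -- (H4)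
    (h4 : ∀ ε > (0 : ℝ), ∃ δ > (0 : ℝ), ∀ u : B, (∀ γ : Γ, nw (γ • u) < δ) → ns u < ε)
    (Φ : ℝ → B → B)
    (hequiv : ∀ (t : ℝ) (γ : Γ) (u : B), Φ t (γ • u) = γ • Φ t u)
    -- strong and weak continuity of the semiflow
    (hscont : ∀ t : ℝ, 0 ≤ t → ∀ u : B, ∀ ε > (0 : ℝ), ∃ δ > (0 : ℝ),
      ∀ v : B, ns (v - u) < δ → ns (Φ t v - Φ t u) < ε)
    (hwcont : ∀ t : ℝ, 0 ≤ t → ∀ u : B, ∀ ε > (0 : ℝ), ∃ δ > (0 : ℝ),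
      ∀ v : B, nw (v - u) < δ → nw (Φ t v - Φ t u) < ε)
    (u₀ v₀ : B)
    (hclos : InWeakOrbitClosure (Γ := Γ) nw u₀ v₀)
    -- `v₀` has cocompact isotropy
    (hcocompact : CompactSpace (Γ ⧸ MulAction.stabilizer Γ v₀))
    (hss : SsStable ns Φ u₀) :
    SsStable ns Φ v₀ := by
  -- `nw ≤ ns`, from (H2)(a) and nonemptiness of `Λ`
  obtain ⟨L₀, hL₀, -⟩ := h2b 1 one_pos 1 one_pos
  have hwn : ∀ x : B, nw x ≤ ns x := fun x => (h2a L₀ hL₀ x).1.trans (h2a L₀ hL₀ x).2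
  -- Step 1 (Theorem 4.2): `v₀` is sw-stable
  have hsw : SwStable ns nw Φ v₀ := by
    intro ε hε
    obtain ⟨δ₁, hδ₁, hs1⟩ := hss (ε / 3) (by linarith)
    refine ⟨δ₁, hδ₁, fun u hu t ht => ?_⟩
    obtain ⟨γseq, hγ⟩ := hclos
    obtain ⟨da, hda, hA⟩ := hwcont t ht.le u (ε / 3) (by linarith)
    obtain ⟨db, hdb, hB⟩ := hwcont t ht.le v₀ (ε / 3) (by linarith)
    obtain ⟨k, hk⟩ := (hγ.eventually_lt_const (lt_min hda hdb)).exists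
    set γ := γseq k with hγk
    set w := u - v₀ + γ • u₀ with hw
    -- middle term: strong stability of `u₀` transported by `γ`
    have hmid : ns (Φ t w - Φ t (γ • u₀)) < ε / 3 := by
      have h1 : ns (γ⁻¹ • w - u₀) < δ₁ := by
        have he : γ⁻¹ • w - u₀ = γ⁻¹ • (u - v₀) := by
          rw [hw, smul_add, inv_smul_smul]; abel
        rw [he, h1a]; exact hu
      have h2 := hs1 _ h1 t ht
      rw [hequiv] at h2
      calc ns (Φ t w - Φ t (γ • u₀))
          = ns (γ • (γ⁻¹ • Φ t w - Φ t u₀)) := by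
            rw [smul_sub, smul_inv_smul, hequiv]
        _ = ns (γ⁻¹ • Φ t w - Φ t u₀) := h1a _ _
        _ < ε / 3 := h2
    -- first term: weak continuity of `Φ t` at `u`
    have hfirst : nw (Φ t u - Φ t w) < ε / 3 := by
      have hwu : nw (w - u) < da := by
        have he : w - u = γ • u₀ - v₀ := by rw [hw]; abel
        rw [he]; exact hk.trans_le (min_le_left _ _)
      have := hA w hwu
      rwa [map_sub_rev] at this
    -- third term: weak continuity of `Φ t` at `v₀`
    have hthird : nw (Φ t (γ • u₀) - Φ t v₀) < ε / 3 :=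
      hB _ (hk.trans_le (min_le_right _ _))
    have htri := seminorm_tri3 nw (Φ t u) (Φ t w) (Φ t (γ • u₀)) (Φ t v₀)
    have hmid' : nw (Φ t w - Φ t (γ • u₀)) ≤ ns (Φ t w - Φ t (γ • u₀)) := hwn _
    linarith
  -- Step 2 (Lemma 4.3): upgrade sw-stability of `v₀` to ss-stability, via (H4)
  intro ε hε
  obtain ⟨δ₄, hδ₄, hH4⟩ := h4 ε hε
  obtain ⟨C, hC1, hCprop⟩ :=
    exists_cocompact_weight_bound (MulAction.stabilizer Γ v₀) hcocompact wop h1c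
  have hC0 : (0 : ℝ) < C := lt_of_lt_of_le one_pos hC1
  have hε' : (0 : ℝ) < δ₄ / (2 * C) := by positivity
  obtain ⟨δ₂, hδ₂, hsw2⟩ := hsw (δ₄ / (2 * C)) hε'
  refine ⟨δ₂, hδ₂, fun u hu t ht => ?_⟩
  apply hH4
  intro σ
  obtain ⟨τ, s, hsH, hστ, hwτ⟩ := hCprop σ
  have hsv : s • v₀ = v₀ := hsH
  have h5 : ns (s • u - v₀) < δ₂ := by
    calc ns (s • u - v₀) = ns (s • u - s • v₀) := by rw [hsv]
      _ = ns (s • (u - v₀)) := by rw [smul_sub]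
      _ = ns (u - v₀) := h1a _ _
      _ < δ₂ := hu
  have h6 : nw (Φ t (s • u) - Φ t v₀) < δ₄ / (2 * C) := hsw2 _ h5 t ht
  have hre : σ • (Φ t u - Φ t v₀) = τ • (Φ t (s • u) - Φ t v₀) := by
    calc σ • (Φ t u - Φ t v₀) = τ • (s • (Φ t u - Φ t v₀)) := by rw [hστ, mul_smul]
      _ = τ • (Φ t (s • u) - Φ t (s • v₀)) := by rw [smul_sub, hequiv, hequiv]
      _ = τ • (Φ t (s • u) - Φ t v₀) := by rw [hsv]
  calc nw (σ • (Φ t u - Φ t v₀))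
      = nw (τ • (Φ t (s • u) - Φ t v₀)) := by rw [hre]
    _ ≤ wop τ * nw (Φ t (s • u) - Φ t v₀) := (h1b τ).2 _
    _ ≤ C * nw (Φ t (s • u) - Φ t v₀) :=
        mul_le_mul_of_nonneg_right hwτ (apply_nonneg nw _)
    _ < C * (δ₄ / (2 * C)) := by
        exact mul_lt_mul_of_pos_left h6 hC0
    _ = δ₄ / 2 := by field_simp
    _ < δ₄ := by linarith
end
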